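/- Let (X, μ) be a finite measure space, and let ψ : S² × ℝ³ → [0, +∞] be jointly lower semicontinuous and convex in its second argument. Let τ_n, τ : X → S² be measurable with esssup_x |τ_n(x) − τ(x)| → 0 as n → ∞, and let W_n ⇀ W converge weakly in L²(μ; ℝ³). Then liminf_{n→∞} ∫_X ψ(τ_n(x), W_n(x)) dμ(x) ≥ ∫_X ψ(τ(x), W(x)) dμ(x). -/

import Mathlib

open MeasureTheory Filter
open scoped ENNReal RealInnerProductSpace

noncomputable section

namespace Stmt17

abbrev E3 := EuclideanSpace ℝ (Fin 3)

/-- real convexity of squares -/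
lemma sq_cvx {a b x y : ℝ} (ha : 0 ≤ a) (hb : 0 ≤ b) (hab : a + b = 1) :
    (a * x + b * y) ^ 2 ≤ a * x ^ 2 + b * y ^ 2 := by nlinarith [sq_nonneg (x - y), mul_nonneg ha hb]

/-- ofReal of a finset sum is at most the sum of ofReals -/
lemma ofReal_sum_le {ι : Type*} (t : Finset ι) (f : ι → ℝ) :
    ENNReal.ofReal (∑ i ∈ t, f i) ≤ ∑ i ∈ t, ENNReal.ofReal (f i) := by
  classical
  induction t using Finset.induction with
  | empty => simp
  | insert a s h ih =>
      rw [Finset.sum_insert h, Finset.sum_insert h]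
      exact le_trans (ENNReal.ofReal_add_le) (by gcongr)

/-- lower semicontinuity of the extension by ⊤ off a closed set -/
lemma lsc_extension {α : Type*} [TopologicalSpace α] {S : Set α} [DecidablePred (· ∈ S)] (hS : IsClosed S)
    {f : α → ℝ≥0∞} (hf : LowerSemicontinuousOn f S) :
    LowerSemicontinuous (fun p => if p ∈ S then f p else (⊤ : ℝ≥0∞)) := by
  intro x y hy
  simp only at hy
  have hnhds : nhds x = nhdsWithin x S ⊔ nhdsWithin x Sᶜ := by
    rw [← nhdsWithin_union, Set.union_compl_self, nhdsWithin_univ]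
  by_cases hx : x ∈ S
  · rw [if_pos hx] at hy
    have h1 : ∀ᶠ p in nhdsWithin x S, y < if p ∈ S then f p else ⊤ := by
      filter_upwards [hf x hx y hy, self_mem_nhdsWithin] with p h1 h2
      rwa [if_pos h2]
    have h2 : ∀ᶠ p in nhdsWithin x Sᶜ, y < if p ∈ S then f p else ⊤ := by
      filter_upwards [self_mem_nhdsWithin] with p h2
      rw [if_neg h2]
      exact hy.trans_le le_top
    rw [show (fun x' => y < if x' ∈ S then f x' else ⊤) = fun x' => y < if x' ∈ S then f x' else ⊤ from rfl]
    rw [hnhds]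
    exact Filter.eventually_sup.mpr ⟨h1, h2⟩
  · rw [if_neg hx] at hy
    filter_upwards [hS.isOpen_compl.eventually_mem hx] with p hp
    rw [if_neg hp]; exact hy
end Stmt17

namespace Stmt17

lemma one_div_succ_le {k j : ℕ} (h : k ≤ j) : 1 / ((j : ℝ) + 1) ≤ 1 / ((k : ℝ) + 1) := by
  apply one_div_le_one_div_of_le (by positivity)
  have : (k : ℝ) ≤ j := Nat.cast_le.mpr h
  linarith

lemma one_div_succ_pos (k : ℕ) : (0:ℝ) < 1 / ((k : ℝ) + 1) := by positivity

lemma tendsto_one_div_succ : Tendsto (fun k : ℕ => 1 / ((k : ℝ) + 1)) atTop (nhds 0) :=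
  tendsto_one_div_add_atTop_nhds_zero_nat

lemma keyA_compact (f : E3 × E3 → ℝ≥0∞) (hf : LowerSemicontinuous f)
    {ε : ℝ} (hε : 0 < ε)
    (hcoer : ∀ p : E3 × E3, ENNReal.ofReal (ε * ‖p.2‖ ^ 2) ≤ f p)
    {τ : E3} (α : ℝ) (b : E3)
    (H : ∀ k : ℕ, ∃ σ w : E3, ‖σ‖ = 1 ∧ ‖σ - τ‖ ≤ 1 / ((k : ℝ) + 1) ∧
        f (σ, w) < ENNReal.ofReal (α + ⟪b, w⟫)) :
    ∃ w' : E3, ∃ t' : ℝ, 0 ≤ t' ∧ f (τ, w') ≤ ENNReal.ofReal t' ∧ t' ≤ α + ⟪b, w'⟫ := by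
  choose σk wk h1 h2 h3 using H
  set tk : ℕ → ℝ := fun k => (f (σk k, wk k)).toReal with htk
  have hfe : ∀ k, ENNReal.ofReal (tk k) = f (σk k, wk k) := fun k =>
    ENNReal.ofReal_toReal (ne_top_of_lt (h3 k))
  have htk0 : ∀ k, 0 ≤ tk k := fun k => ENNReal.toReal_nonneg
  have hlpos : ∀ k, 0 < α + ⟪b, wk k⟫ := fun k =>
    ENNReal.ofReal_pos.mp (zero_le.trans_lt (h3 k))
  have htlt : ∀ k, tk k < α + ⟪b, wk k⟫ := fun k => by
    have := h3 k
    rw [← hfe k] at this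
    exact (ENNReal.ofReal_lt_ofReal_iff (hlpos k)).mp this
  have hcoerk : ∀ k, ε * ‖wk k‖ ^ 2 ≤ tk k := fun k => by
    have h := hcoer (σk k, wk k)
    rw [← hfe k] at h
    exact (ENNReal.ofReal_le_ofReal_iff (htk0 k)).mp h
  set R : ℝ := max 1 ((|α| + ‖b‖) / ε) with hR
  have hR0 : 0 < R := lt_of_lt_of_le one_pos (le_max_left _ _)
  have hwR : ∀ k, ‖wk k‖ ≤ R := by
    intro k
    have h4 : ε * ‖wk k‖ ^ 2 ≤ |α| + ‖b‖ * ‖wk k‖ :=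
      (hcoerk k).trans ((htlt k).le.trans (add_le_add (le_abs_self α) (real_inner_le_norm b (wk k))))
    rcases le_or_gt ‖wk k‖ 1 with h5 | h5
    · exact h5.trans (le_max_left _ _)
    · refine le_trans ?_ (le_max_right _ _)
      rw [le_div_iff₀ hε]
      nlinarith [abs_nonneg α, norm_nonneg b, norm_nonneg (wk k)]
  set T : ℝ := |α| + ‖b‖ * R with hT
  have htT : ∀ k, tk k ≤ T := fun k =>
    (htlt k).le.trans (add_le_add (le_abs_self α)
      ((real_inner_le_norm b _).trans (mul_le_mul_of_nonneg_left (hwR k) (norm_nonneg b))))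
  set K : Set (E3 × E3 × ℝ) :=
    Metric.sphere 0 1 ×ˢ (Metric.closedBall 0 R ×ˢ Set.Icc 0 T) with hKdef
  have hK : IsCompact K :=
    (isCompact_sphere 0 1).prod ((isCompact_closedBall 0 R).prod isCompact_Icc)
  set seq : ℕ → E3 × E3 × ℝ := fun k => (σk k, wk k, tk k) with hseq
  have hmem : ∀ k, seq k ∈ K := fun k =>
    ⟨mem_sphere_zero_iff_norm.mpr (h1 k),
     mem_closedBall_zero_iff.mpr (hwR k), (htk0 k), (htT k)⟩
  obtain ⟨⟨σ', w', t'⟩, hmemK, φ, hφmono, hφt⟩ := hK.tendsto_subseq hmem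
  have hσt : Tendsto (fun j => σk (φ j)) atTop (nhds σ') :=
    (continuous_fst.tendsto _).comp hφt
  have hwt : Tendsto (fun j => wk (φ j)) atTop (nhds w') :=
    ((continuous_fst.comp continuous_snd).tendsto _).comp hφt
  have htt : Tendsto (fun j => tk (φ j)) atTop (nhds t') :=
    ((continuous_snd.comp continuous_snd).tendsto _).comp hφt
  have hσ2 : Tendsto (fun j => σk (φ j)) atTop (nhds τ) := by
    rw [tendsto_iff_dist_tendsto_zero]
    refine squeeze_zero (fun j => dist_nonneg) (fun j => ?_) tendsto_one_div_succ
    calc dist (σk (φ j)) τ = ‖σk (φ j) - τ‖ := dist_eq_norm _ _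
    _ ≤ 1 / ((φ j : ℝ) + 1) := h2 (φ j)
    _ ≤ 1 / ((j : ℝ) + 1) := one_div_succ_le (hφmono.le_apply)
  have ht'0 : 0 ≤ t' := hmemK.2.2.1
  have hlin : t' ≤ α + ⟪b, w'⟫ := by
    have hcont : Continuous fun w : E3 => α + ⟪b, w⟫ :=
      continuous_const.add (Continuous.inner continuous_const continuous_id)
    exact le_of_tendsto_of_tendsto' htt ((hcont.tendsto w').comp hwt) (fun j => (htlt (φ j)).le)
  refine ⟨w', t', ht'0, ?_, hlin⟩
  by_contra hcon2
  push_neg at hcon2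
  obtain ⟨y, hy1, hy2⟩ := exists_between hcon2
  have hp : Tendsto (fun j => (σk (φ j), wk (φ j))) atTop (nhds (τ, w')) :=
    hσ2.prodMk_nhds hwt
  have hev2 := hp.eventually (hf (τ, w') y hy2)
  have hev3 : ∀ᶠ j in atTop, ENNReal.ofReal (tk (φ j)) < y :=
    (((ENNReal.continuous_ofReal.tendsto t').comp htt).eventually_lt_const hy1)
  obtain ⟨j, hj2, hj3⟩ := (hev2.and hev3).exists
  rw [← hfe (φ j)] at hj2
  exact absurd (hj2.trans hj3) (lt_irrefl y)

end Stmt17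

namespace Stmt17

lemma keyA (f : E3 × E3 → ℝ≥0∞) (hf : LowerSemicontinuous f)
    {ε : ℝ} (hε : 0 < ε)
    (hcoer : ∀ p : E3 × E3, ENNReal.ofReal (ε * ‖p.2‖ ^ 2) ≤ f p)
    {τ : E3} (hτ : ‖τ‖ = 1)
    (hconvτ : ∀ v w : E3, ∀ a b : ℝ, 0 ≤ a → 0 ≤ b → a + b = 1 →
      f (τ, a • v + b • w) ≤ ENNReal.ofReal a * f (τ, v) + ENNReal.ofReal b * f (τ, w))
    (v : E3) {c : ℝ} (hc0 : 0 ≤ c) (hcf : ENNReal.ofReal c < f (τ, v)) :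
    ∃ δ : ℝ, 0 < δ ∧ ∃ α : ℝ, ∃ b : E3, c < α + ⟪b, v⟫ ∧
      ∀ σ w : E3, ‖σ‖ = 1 → ‖σ - τ‖ ≤ δ →
        ENNReal.ofReal (α + ⟪b, w⟫) ≤ f (σ, w) := by
  by_contra hcon
  push_neg at hcon
  have hcon' : ∀ (α : ℝ) (b : E3), c < α + ⟪b, v⟫ →
      ∀ k : ℕ, ∃ σ w : E3, ‖σ‖ = 1 ∧ ‖σ - τ‖ ≤ 1 / ((k : ℝ) + 1) ∧
        f (σ, w) < ENNReal.ofReal (α + ⟪b, w⟫) :=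
    fun α b hval k => hcon (1 / ((k : ℝ) + 1)) (one_div_succ_pos k) α b hval
  clear hcon
  set E0 : Set (E3 × ℝ) := {p | 0 ≤ p.2 ∧ f (τ, p.1) ≤ ENNReal.ofReal p.2} with hE0def
  by_cases hne : E0.Nonempty
  case neg =>
    -- f (τ, ·) is identically ⊤
    have htop : ∀ w : E3, f (τ, w) = ⊤ := by
      intro w
      by_contra h
      exact hne ⟨(w, (f (τ, w)).toReal),
        ⟨ENNReal.toReal_nonneg, by rw [ENNReal.ofReal_toReal h]⟩⟩
    have hval : c < (c + 1) + ⟪(0 : E3), v⟫ := by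
      rw [inner_zero_left]; linarith
    obtain ⟨w', t', ht'0, hft', hlin⟩ :=
      keyA_compact f hf hε hcoer (c + 1) 0 (hcon' (c + 1) 0 hval)
    rw [htop w'] at hft'
    exact absurd (top_le_iff.mp hft') ENNReal.ofReal_ne_top
  case pos =>
    have hconvE : Convex ℝ E0 := by
      intro p hp q hq a b ha hb hab
      constructor
      · have : (a • p + b • q).2 = a * p.2 + b * q.2 := rfl
        rw [this]
        have := hp.1; have := hq.1
        positivity
      · have h1 : (a • p + b • q).1 = a • p.1 + b • q.1 := rfl
        have h2 : (a • p + b • q).2 = a * p.2 + b * q.2 := rfl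
        rw [h1, h2]
        refine le_trans (hconvτ p.1 q.1 a b ha hb hab) ?_
        calc ENNReal.ofReal a * f (τ, p.1) + ENNReal.ofReal b * f (τ, q.1)
            ≤ ENNReal.ofReal a * ENNReal.ofReal p.2 + ENNReal.ofReal b * ENNReal.ofReal q.2 := by
              gcongr
              exacts [hp.2, hq.2]
        _ = ENNReal.ofReal (a * p.2) + ENNReal.ofReal (b * q.2) := by
              rw [ENNReal.ofReal_mul ha, ENNReal.ofReal_mul hb]
        _ = ENNReal.ofReal (a * p.2 + b * q.2) :=
              (ENNReal.ofReal_add (mul_nonneg ha hp.1) (mul_nonneg hb hq.1)).symm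
    have hlsc2 : LowerSemicontinuous (fun p : E3 × ℝ => f (τ, p.1)) :=
      hf.comp (continuous_const.prodMk continuous_fst)
    have hclosedE : IsClosed E0 := by
      have h1 : IsClosed {p : E3 × ℝ | 0 ≤ p.2} :=
        isClosed_le continuous_const continuous_snd
      have h2 : IsClosed {p : E3 × ℝ | f (τ, p.1) ≤ ENNReal.ofReal p.2} := by
        rw [← isOpen_compl_iff]
        rw [isOpen_iff_mem_nhds]
        intro p hp
        simp only [Set.mem_compl_iff, Set.mem_setOf_eq, not_le] at hp
        obtain ⟨y, hy1, hy2⟩ := exists_between hp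
        have hev1 := hlsc2 p y hy2
        have hev2 : ∀ᶠ q : E3 × ℝ in nhds p, ENNReal.ofReal q.2 < y :=
          ((ENNReal.continuous_ofReal.comp continuous_snd).tendsto p).eventually_lt_const hy1
        filter_upwards [hev1, hev2] with q hq1 hq2
        simp only [Set.mem_compl_iff, Set.mem_setOf_eq, not_le]
        exact hq2.trans hq1
      exact h1.inter h2
    have hnotmem : ((v, c) : E3 × ℝ) ∉ E0 := fun h => absurd h.2 (not_le.mpr hcf)
    obtain ⟨g₀, u, hgu, hu⟩ := geometric_hahn_banach_closed_point hconvE hclosedE hnotmem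
    have hg0 : ∀ (w : E3) (t : ℝ), g₀ (w, t) = g₀ (w, 0) + t * g₀ (0, 1) := by
      intro w t
      have h1 : ((w, t) : E3 × ℝ) = (w, (0:ℝ)) + t • ((0:E3), (1:ℝ)) := by
        simp [Prod.ext_iff]
      rw [h1, map_add, ContinuousLinearMap.map_smul, smul_eq_mul]
    set β₀ : ℝ := g₀ (0, 1) with hβ₀def
    obtain ⟨p₀, hp₀⟩ := hne
    have hβ₀ : β₀ ≤ 0 := by
      by_contra h
      push_neg at h
      set A : ℝ := g₀ (p₀.1, 0) with hA
      set s₀ : ℝ := max 0 ((u - A + 1) / β₀ - p₀.2) with hs₀def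
      have hs₀ : 0 ≤ s₀ := le_max_left _ _
      have hmem2 : ((p₀.1, p₀.2 + s₀) : E3 × ℝ) ∈ E0 := by
        constructor
        · show 0 ≤ p₀.2 + s₀
          linarith [hp₀.1]
        · show f (τ, p₀.1) ≤ ENNReal.ofReal (p₀.2 + s₀)
          exact le_trans hp₀.2 (ENNReal.ofReal_le_ofReal (by linarith))
      have h2 := hgu _ hmem2
      rw [hg0] at h2
      have h3 : (u - A + 1) / β₀ ≤ p₀.2 + s₀ := by
        have := le_max_right 0 ((u - A + 1) / β₀ - p₀.2)
        have h4 : (u - A + 1) / β₀ - p₀.2 ≤ s₀ := this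
        linarith
      have h5 : ((u - A + 1) / β₀) * β₀ ≤ (p₀.2 + s₀) * β₀ :=
        mul_le_mul_of_nonneg_right h3 h.le
      rw [div_mul_cancel₀ _ (ne_of_gt h)] at h5
      linarith
    set η : ℝ := (g₀ ((v, c)) - u) / (2 * (c + 1)) with hηdef
    have hη : 0 < η := div_pos (by linarith) (by linarith)
    set β : ℝ := β₀ - η with hβdef
    have hβ : β < 0 := by linarith
    set b₀ : E3 := (InnerProductSpace.toDual ℝ E3).symm
      (g₀.comp (ContinuousLinearMap.inl ℝ E3 ℝ)) with hb₀def
    have hb₀ : ∀ w : E3, ⟪b₀, w⟫ = g₀ (w, 0) := by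
      intro w
      rw [hb₀def, InnerProductSpace.toDual_symm_apply]
      rfl
    have hE : ∀ p ∈ E0, ⟪b₀, p.1⟫ + β * p.2 < u := by
      intro p hp
      have h2 := hgu p hp
      have h3 : g₀ p = g₀ (p.1, 0) + p.2 * β₀ := hg0 p.1 p.2
      have h4 := hb₀ p.1
      have h5 : 0 ≤ p.2 := hp.1
      nlinarith [mul_nonneg hη.le h5]
    have hV : u < ⟪b₀, v⟫ + β * c := by
      have h3 : g₀ ((v, c)) = g₀ (v, 0) + c * β₀ := hg0 v c
      have h4 := hb₀ v
      have hc1 : (0:ℝ) < c + 1 := by linarith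
      have h6 : η * (c + 1) = (g₀ ((v, c)) - u) / 2 := by
        rw [hηdef]; field_simp
      have h7 : η * c ≤ η * (c + 1) := mul_le_mul_of_nonneg_left (by linarith) hη.le
      nlinarith
    set α : ℝ := u / β with hαdef
    set b : E3 := (-(1:ℝ) / β) • b₀ with hbdef
    have hℓ : ∀ w : E3, α + ⟪b, w⟫ = (u - ⟪b₀, w⟫) / β := by
      intro w
      rw [hbdef, real_inner_smul_left, hαdef]
      field_simp
      ring
    have hval : c < α + ⟪b, v⟫ := by
      rw [hℓ v, lt_div_iff_of_neg hβ]
      linarith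
    obtain ⟨w', t', ht'0, hft', hlin⟩ :=
      keyA_compact f hf hε hcoer α b (hcon' α b hval)
    have hmem3 : ((w', t') : E3 × ℝ) ∈ E0 := ⟨ht'0, hft'⟩
    have h8 := hE _ hmem3
    have h9 : α + ⟪b, w'⟫ < t' := by
      rw [hℓ w', div_lt_iff_of_neg hβ]
      simp only at h8
      linarith
    linarith

end Stmt17

namespace Stmt17

lemma mazur {H : Type*} [NormedAddCommGroup H] [InnerProductSpace ℝ H] [CompleteSpace H]
    (W : ℕ → H) (W' : H)
    (hweak : ∀ φ : H, Tendsto (fun n => (⟪φ, W n⟫ : ℝ)) atTop (nhds (⟪φ, W'⟫ : ℝ)))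
    (S : Set H) (hS : ∀ᶠ n in atTop, W n ∈ S) :
    W' ∈ closure (convexHull ℝ S) := by
  by_contra hnot
  obtain ⟨g, u, hgu, hu⟩ := geometric_hahn_banach_closed_point
    (convex_convexHull ℝ S).closure isClosed_closure hnot
  have hg : Tendsto (fun n => g (W n)) atTop (nhds (g W')) := by
    have h1 := hweak ((InnerProductSpace.toDual ℝ H).symm g)
    simp only [InnerProductSpace.toDual_symm_apply] at h1
    exact h1
  have hev : ∀ᶠ n in atTop, u < g (W n) := hg.eventually_const_lt hu
  obtain ⟨n, hn1, hn2⟩ := (hev.and hS).exists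
  exact absurd (hgu _ (subset_closure (subset_convexHull ℝ S hn2))) (not_lt.mpr hn1.le)

lemma coeFn_finset_sum {X : Type*} [MeasurableSpace X] {μ : Measure X} {ι : Type*}
    (t : Finset ι) (f : ι → Lp E3 2 μ) :
    ⇑(∑ i ∈ t, f i) =ᵐ[μ] fun x => ∑ i ∈ t, f i x := by
  classical
  induction t using Finset.induction with
  | empty =>
      simp only [Finset.sum_empty]
      exact Lp.coeFn_zero E3 2 μ
  | @insert a s ha ih =>
      rw [Finset.sum_insert ha]
      filter_upwards [Lp.coeFn_add (f a) (∑ i ∈ s, f i), ih] with x h1 h2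
      rw [Finset.sum_insert ha, h1]
      simp only [Pi.add_apply, h2]

lemma liminf_add_const_le {u : ℕ → ℝ≥0∞} {c : ℝ≥0∞} :
    atTop.liminf (fun n => u n + c) ≤ atTop.liminf u + c :=
  le_of_eq (liminf_add_const atTop u c (by isBoundedDefault) (by isBoundedDefault))

end Stmt17

namespace Stmt17

lemma convexHull_image_Ici {H : Type*} [AddCommGroup H] [Module ℝ H]
    (g : ℕ → H) (k : ℕ) (y : H) (hy : y ∈ convexHull ℝ (g '' Set.Ici k)) :
    ∃ (m : ℕ) (wt : Fin m → ℝ) (jdx : Fin m → ℕ),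
      (∀ i, 0 ≤ wt i) ∧ (∑ i, wt i = 1) ∧ (∀ i, k ≤ jdx i) ∧
      (∑ i, wt i • g (jdx i) = y) := by
  rw [convexHull_eq] at hy
  obtain ⟨ι, t, w, z, hw0, hw1, hz, hcm⟩ := hy
  rw [Finset.centerMass_eq_of_sum_1 _ _ hw1] at hcm
  have hz' : ∀ i : t, ∃ j, k ≤ j ∧ g j = z i := by
    intro i
    obtain ⟨j, hj1, hj2⟩ := hz i i.2
    exact ⟨j, hj1, hj2⟩
  choose jz hjz1 hjz2 using hz'
  refine ⟨t.card, fun i => w ((t.equivFin.symm i) : ι), fun i => jz (t.equivFin.symm i),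
    fun i => hw0 _ (t.equivFin.symm i).2, ?_, fun i => hjz1 _, ?_⟩
  · calc ∑ i : Fin t.card, w ((t.equivFin.symm i : t) : ι)
        = ∑ a : t, w (a : ι) := Equiv.sum_comp t.equivFin.symm (fun a : t => w (a : ι))
    _ = ∑ a ∈ t, w a := Finset.sum_coe_sort t w
    _ = 1 := hw1
  · calc ∑ i : Fin t.card, w ((t.equivFin.symm i : t) : ι) • g (jz (t.equivFin.symm i))
        = ∑ a : t, w (a : ι) • g (jz a) :=
          Equiv.sum_comp t.equivFin.symm (fun a : t => w (a : ι) • g (jz a))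
    _ = ∑ a : t, w (a : ι) • z (a : ι) := Finset.sum_congr rfl fun a _ => by rw [hjz2]
    _ = ∑ a ∈ t, w a • z a := Finset.sum_coe_sort t (fun a => w a • z a)
    _ = y := hcm

lemma lintegral_norm_sq_le {X : Type*} [MeasurableSpace X] {μ : Measure X}
    (f : Lp E3 2 μ) {M : ℝ} (hM : ‖f‖ ≤ M) :
    ∫⁻ x, ENNReal.ofReal (‖f x‖ ^ 2) ∂μ ≤ ENNReal.ofReal M ^ 2 := by
  have h0 : 0 ≤ M := le_trans (norm_nonneg f) hM
  have hB : eLpNorm (⇑f) 2 μ ≤ ENNReal.ofReal M := by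
    refine (ENNReal.le_ofReal_iff_toReal_le (Lp.eLpNorm_ne_top f) h0).mpr ?_
    rw [← Lp.norm_def]
    exact hM
  calc ∫⁻ x, ENNReal.ofReal (‖f x‖ ^ 2) ∂μ
      = ∫⁻ x, ((‖f x‖₊ : ℝ≥0∞)) ^ (2 : ℝ) ∂μ := by
        refine lintegral_congr fun x => ?_
        rw [ENNReal.ofReal_pow (norm_nonneg _), ofReal_norm_eq_enorm, enorm_eq_nnnorm]
        rw [← ENNReal.rpow_natCast _ 2]
        norm_num
  _ = (eLpNorm (⇑f) 2 μ) ^ (2 : ℝ) := by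
        rw [eLpNorm_eq_lintegral_rpow_enorm_toReal two_ne_zero ENNReal.ofNat_ne_top]
        simp only [enorm_eq_nnnorm]
        rw [← ENNReal.rpow_mul]
        norm_num
  _ ≤ (ENNReal.ofReal M) ^ (2 : ℝ) := by
        exact ENNReal.rpow_le_rpow hB (by norm_num)
  _ = (ENNReal.ofReal M) ^ 2 := by
        rw [← ENNReal.rpow_natCast _ 2]
        norm_num

end Stmt17

namespace Stmt17

lemma mainEstimate {X : Type*} [MeasurableSpace X] (μ : Measure X) [IsFiniteMeasure μ]
    (F : E3 × E3 → ℝ≥0∞) (hF : LowerSemicontinuous F)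
    {ε : ℝ} (hε : 0 < ε)
    (hcoer : ∀ p : E3 × E3, ENNReal.ofReal (ε * ‖p.2‖ ^ 2) ≤ F p)
    (hconvF : ∀ τ : E3, ‖τ‖ = 1 → ∀ v w : E3, ∀ a b : ℝ, 0 ≤ a → 0 ≤ b → a + b = 1 →
      F (τ, a • v + b • w) ≤ ENNReal.ofReal a * F (τ, v) + ENNReal.ofReal b * F (τ, w))
    (τn : ℕ → X → E3) (τ : X → E3)
    (hτnmeas : ∀ n, Measurable (τn n))
    (hτnunit : ∀ n x, ‖τn n x‖ = 1) (hτunit : ∀ x, ‖τ x‖ = 1)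
    (hτconv : ∀ δ : ℝ, 0 < δ → ∃ N : ℕ, ∀ n ≥ N, ∀ᵐ x ∂μ, ‖τn n x - τ x‖ ≤ δ)
    (W : ℕ → Lp E3 2 μ) (W' : Lp E3 2 μ)
    (hweak : ∀ φ : Lp E3 2 μ, Tendsto (fun n => (⟪φ, W n⟫ : ℝ)) atTop (nhds (⟪φ, W'⟫ : ℝ))) :
    (∫⁻ x, F (τ x, W' x) ∂μ) ≤ atTop.liminf fun n => ∫⁻ x, F (τn n x, W n x) ∂μ := by
  classical
  set I : ℕ → ℝ≥0∞ := fun n => ∫⁻ x, F (τn n x, W n x) ∂μ with hIdef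
  set L : ℝ≥0∞ := atTop.liminf I with hLdef
  show (∫⁻ x, F (τ x, W' x) ∂μ) ≤ L
  by_cases hLtop : L = ⊤
  · rw [hLtop]; exact le_top
  have hFmeas : Measurable F := hF.measurable
  have hWmeas : ∀ n : ℕ, AEMeasurable (fun x => (W n : X → E3) x) μ := fun n =>
    (Lp.aestronglyMeasurable (W n)).aemeasurable
  have hcompmeas : ∀ n : ℕ, AEMeasurable (fun x => F (τn n x, W n x)) μ := fun n =>
    hFmeas.comp_aemeasurable (((hτnmeas n).aemeasurable).prodMk (hWmeas n))
  -- extraction of a good subsequence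
  have hfreq : ∀ k : ℕ, ∃ᶠ n in atTop,
      (I n ≤ L + ENNReal.ofReal (1/((k:ℝ)+1)) ∧ ∀ᵐ x ∂μ, ‖τn n x - τ x‖ ≤ 1/((k:ℝ)+1)) := by
    intro k
    have h1 : L < L + ENNReal.ofReal (1/((k:ℝ)+1)) :=
      ENNReal.lt_add_right hLtop (ne_of_gt (ENNReal.ofReal_pos.mpr (one_div_succ_pos k)))
    have h2 : ∃ᶠ n in atTop, I n < L + ENNReal.ofReal (1/((k:ℝ)+1)) :=
      frequently_lt_of_liminf_lt (by isBoundedDefault) h1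
    obtain ⟨N, hN⟩ := hτconv (1/((k:ℝ)+1)) (one_div_succ_pos k)
    have h3 : ∀ᶠ n in atTop, ∀ᵐ x ∂μ, ‖τn n x - τ x‖ ≤ 1/((k:ℝ)+1) :=
      eventually_atTop.mpr ⟨N, hN⟩
    exact (h2.mono fun n hn => hn.le).and_eventually h3
  obtain ⟨s, hsmono, hsP⟩ := extraction_forall_of_frequently hfreq
  -- Mazur: approximating convex combinations of tails of the subsequence
  have hweak' : ∀ φ : Lp E3 2 μ,
      Tendsto (fun j => (⟪φ, W (s j)⟫ : ℝ)) atTop (nhds (⟪φ, W'⟫ : ℝ)) := fun φ =>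
    (hweak φ).comp (hsmono.tendsto_atTop)
  have hmaz : ∀ k : ℕ, ∃ y ∈ convexHull ℝ ((fun j => W (s j)) '' Set.Ici k),
      dist W' y < 1/((k:ℝ)+1) := by
    intro k
    have hcl : W' ∈ closure (convexHull ℝ ((fun j => W (s j)) '' Set.Ici k)) := by
      refine mazur _ _ hweak' _ ?_
      exact eventually_atTop.mpr ⟨k, fun j hj => ⟨j, hj, rfl⟩⟩
    exact Metric.mem_closure_iff.mp hcl _ (one_div_succ_pos k)
  choose vsel hvin hvdist using hmaz
  have hrep : ∀ k : ℕ, ∃ (m : ℕ) (wt : Fin m → ℝ) (jdx : Fin m → ℕ),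
      (∀ i, 0 ≤ wt i) ∧ (∑ i, wt i = 1) ∧ (∀ i, k ≤ jdx i) ∧
      (∑ i, wt i • W (s (jdx i)) = vsel k) := fun k =>
    convexHull_image_Ici _ k _ (hvin k)
  choose mm wt jdx hwt0 hwt1 hjk hsum using hrep
  -- a.e. convergence along a further subsequence
  have hvtend : Tendsto vsel atTop (nhds W') := by
    rw [tendsto_iff_dist_tendsto_zero]
    refine squeeze_zero (fun k => dist_nonneg) (fun k => ?_) tendsto_one_div_succ
    rw [dist_comm]
    exact (hvdist k).le
  have htim : TendstoInMeasure μ (fun k => (vsel k : X → E3)) atTop W' :=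
    tendstoInMeasure_of_tendsto_Lp hvtend
  obtain ⟨ns, hnsmono, hnsae⟩ := htim.exists_seq_tendsto_ae
  -- coeFn identities
  have hco : ∀ k : ℕ, (vsel k : X → E3) =ᵐ[μ]
      fun x => ∑ i, wt k i • (W (s (jdx k i)) x) := by
    intro k
    rw [← hsum k]
    refine (coeFn_finset_sum Finset.univ (fun i => wt k i • W (s (jdx k i)))).trans ?_
    have h3 : ∀ᵐ x ∂μ, ∀ i : Fin (mm k),
        (wt k i • W (s (jdx k i))) x = wt k i • (W (s (jdx k i)) x) := by
      rw [MeasureTheory.ae_all_iff]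
      exact fun i => Lp.coeFn_smul _ _
    filter_upwards [h3] with x hx
    exact Finset.sum_congr rfl fun i _ => hx i
  have hτae : ∀ᵐ x ∂μ, ∀ k, ‖τn (s k) x - τ x‖ ≤ 1/((k:ℝ)+1) := by
    rw [MeasureTheory.ae_all_iff]
    exact fun k => (hsP k).2
  -- the combined integrand
  set G : ℕ → X → ℝ≥0∞ := fun k x =>
    ∑ i, ENNReal.ofReal (wt k i) * F (τn (s (jdx k i)) x, W (s (jdx k i)) x) with hGdef
  have hGmeas : ∀ k, AEMeasurable (G k) μ := fun k =>
    Finset.aemeasurable_fun_sum _ fun i _ => (hcompmeas (s (jdx k i))).const_mul _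
  have hGint : ∀ k, ∫⁻ x, G k x ∂μ ≤ L + ENNReal.ofReal (1/((k:ℝ)+1)) := by
    intro k
    rw [hGdef]
    rw [lintegral_finset_sum' _ (fun i _ => (hcompmeas (s (jdx k i))).const_mul _)]
    calc ∑ i, ∫⁻ x, ENNReal.ofReal (wt k i) * F (τn (s (jdx k i)) x, W (s (jdx k i)) x) ∂μ
        = ∑ i, ENNReal.ofReal (wt k i) * I (s (jdx k i)) := by
          refine Finset.sum_congr rfl fun i _ => ?_
          rw [lintegral_const_mul'' _ (hcompmeas (s (jdx k i)))]
    _ ≤ ∑ i, ENNReal.ofReal (wt k i) * (L + ENNReal.ofReal (1/((k:ℝ)+1))) := by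
          gcongr with i hi
          refine le_trans (hsP (jdx k i)).1 ?_
          exact add_le_add_right (ENNReal.ofReal_le_ofReal (one_div_succ_le (hjk k i))) L
    _ = (∑ i, ENNReal.ofReal (wt k i)) * (L + ENNReal.ofReal (1/((k:ℝ)+1))) :=
          (Finset.sum_mul _ _ _).symm
    _ = 1 * (L + ENNReal.ofReal (1/((k:ℝ)+1))) := by
          rw [← ENNReal.ofReal_sum_of_nonneg (fun i _ => hwt0 k i), hwt1 k, ENNReal.ofReal_one]
    _ = L + ENNReal.ofReal (1/((k:ℝ)+1)) := one_mul _
  -- pointwise lower semicontinuity estimate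
  have hpt : ∀ᵐ x ∂μ, F (τ x, W' x) ≤ atTop.liminf (fun j => G (ns j) x) := by
    filter_upwards [hτae, hnsae, MeasureTheory.ae_all_iff.mpr hco] with x hx1 hx2 hx3
    refine le_of_forall_lt fun b hb => ?_
    obtain ⟨b', hb1', hb2'⟩ := exists_between hb
    have hb'ne : b' ≠ ⊤ := ne_top_of_lt hb2'
    have hc0 : 0 ≤ b'.toReal := ENNReal.toReal_nonneg
    have hofc : ENNReal.ofReal b'.toReal = b' := ENNReal.ofReal_toReal hb'ne
    have hcf : ENNReal.ofReal b'.toReal < F (τ x, W' x) := by rw [hofc]; exact hb2'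
    obtain ⟨δ, hδ, α, bb, hval, hmin⟩ :=
      keyA F hF hε hcoer (hτunit x) (hconvF (τ x) (hτunit x)) (W' x) hc0 hcf
    have hcont : Continuous fun w : E3 => α + ⟪bb, w⟫ :=
      continuous_const.add (Continuous.inner continuous_const continuous_id)
    have hval2 : Tendsto (fun i => α + ⟪bb, (vsel (ns i) : X → E3) x⟫) atTop
        (nhds (α + ⟪bb, W' x⟫)) := (hcont.tendsto _).comp hx2
    have hev1 : ∀ᶠ i in atTop, b'.toReal < α + ⟪bb, (vsel (ns i) : X → E3) x⟫ :=
      hval2.eventually_const_lt hval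
    have hev2 : ∀ᶠ i in atTop, 1/((ns i : ℝ)+1) ≤ δ := by
      have h4 : ∀ᶠ i : ℕ in atTop, 1/((i:ℝ)+1) < δ :=
        tendsto_one_div_succ.eventually_lt_const hδ
      filter_upwards [h4] with i hi
      exact le_trans (one_div_succ_le (hnsmono.le_apply)) hi.le
    have hkey : ∀ᶠ i in atTop, b' ≤ G (ns i) x := by
      filter_upwards [hev1, hev2] with i h1 h2
      have hsum2 : ∑ i', wt (ns i) i' * (α + ⟪bb, W (s (jdx (ns i) i')) x⟫)
          = α + ⟪bb, (vsel (ns i) : X → E3) x⟫ := by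
        rw [hx3 (ns i), inner_sum]
        simp_rw [real_inner_smul_right, mul_add]
        rw [Finset.sum_add_distrib, ← Finset.sum_mul, hwt1 (ns i), one_mul]
      calc b' = ENNReal.ofReal b'.toReal := hofc.symm
      _ ≤ ENNReal.ofReal (∑ i', wt (ns i) i' * (α + ⟪bb, W (s (jdx (ns i) i')) x⟫)) := by
            rw [hsum2]
            exact ENNReal.ofReal_le_ofReal h1.le
      _ ≤ ∑ i', ENNReal.ofReal (wt (ns i) i' * (α + ⟪bb, W (s (jdx (ns i) i')) x⟫)) :=
            ofReal_sum_le _ _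
      _ = ∑ i', ENNReal.ofReal (wt (ns i) i') *
            ENNReal.ofReal (α + ⟪bb, W (s (jdx (ns i) i')) x⟫) :=
            Finset.sum_congr rfl fun i' _ => ENNReal.ofReal_mul (hwt0 (ns i) i')
      _ ≤ ∑ i', ENNReal.ofReal (wt (ns i) i') *
            F (τn (s (jdx (ns i) i')) x, W (s (jdx (ns i) i')) x) := by
            gcongr with i' hi'
            refine hmin _ _ (hτnunit _ x) ?_
            refine le_trans (hx1 (jdx (ns i) i')) ?_
            exact le_trans (one_div_succ_le (hjk (ns i) i')) h2
      _ = G (ns i) x := rfl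
    have hble : b' ≤ atTop.liminf (fun j => G (ns j) x) :=
      le_liminf_of_le (by isBoundedDefault) hkey
    exact lt_of_lt_of_le hb1' hble
  -- put everything together
  calc ∫⁻ x, F (τ x, W' x) ∂μ
      ≤ ∫⁻ x, atTop.liminf (fun j => G (ns j) x) ∂μ := lintegral_mono_ae hpt
  _ ≤ atTop.liminf (fun j => ∫⁻ x, G (ns j) x ∂μ) :=
      lintegral_liminf_le' (fun j => hGmeas (ns j))
  _ ≤ atTop.liminf (fun j => L + ENNReal.ofReal (1/((ns j : ℝ)+1))) :=
      liminf_le_liminf (Filter.Eventually.of_forall fun j => hGint (ns j))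
  _ ≤ L := by
      have h0 : Tendsto (fun j : ℕ => (1:ℝ)/((ns j:ℝ)+1)) atTop (nhds 0) := by
        refine squeeze_zero (fun j => (one_div_succ_pos (ns j)).le)
          (fun j => one_div_succ_le (hnsmono.le_apply)) tendsto_one_div_succ
      have h1 : Tendsto (fun j : ℕ => ENNReal.ofReal (1/((ns j:ℝ)+1))) atTop (nhds 0) := by
        have := (ENNReal.continuous_ofReal.tendsto 0).comp h0
        simpa [Function.comp_def] using this
      have h2 : Tendsto (fun j : ℕ => L + ENNReal.ofReal (1/((ns j:ℝ)+1))) atTop (nhds L) := by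
        have := h1.const_add L
        simpa using this
      exact le_of_eq h2.liminf_eq

end Stmt17

namespace Stmt17

lemma weak_bounded {X : Type*} [MeasurableSpace X] {μ : Measure X}
    (W : ℕ → Lp E3 2 μ) (W' : Lp E3 2 μ)
    (hweak : ∀ φ : Lp E3 2 μ, Tendsto (fun n => (⟪φ, W n⟫ : ℝ)) atTop (nhds (⟪φ, W'⟫ : ℝ))) :
    ∃ M : ℝ, 0 ≤ M ∧ ∀ n, ‖W n‖ ≤ M := by
  have hbs : ∃ C', ∀ n : ℕ, ‖innerSL ℝ (W n)‖ ≤ C' := by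
    refine banach_steinhaus fun φ => ?_
    have h1 : Tendsto (fun n => (⟪φ, W n⟫ : ℝ)) cofinite (nhds (⟪φ, W'⟫ : ℝ)) := by
      rw [Nat.cofinite_eq_atTop]; exact hweak φ
    obtain ⟨C, hC⟩ := (Metric.isBounded_range_of_tendsto_cofinite h1).subset_closedBall 0
    refine ⟨C, fun n => ?_⟩
    have h2 := hC (Set.mem_range_self n)
    rw [Metric.mem_closedBall, dist_zero_right] at h2
    calc ‖(innerSL ℝ (W n)) φ‖ = ‖(⟪W n, φ⟫ : ℝ)‖ := rfl
    _ = ‖(⟪φ, W n⟫ : ℝ)‖ := by rw [real_inner_comm]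
    _ ≤ C := h2
  obtain ⟨C', hC'⟩ := hbs
  refine ⟨max C' 0, le_max_right _ _, fun n => ?_⟩
  have := hC' n
  rw [innerSL_apply_norm] at this
  exact this.trans (le_max_left _ _)

end Stmt17


open Stmt17 in
/-- Lower semicontinuity of the convex, possibly infinite-valued part of the dissipation
potential: for `ψ : S² × ℝ³ → [0,∞]` jointly lower semicontinuous and convex in its
second argument, tangent fields `τₙ → τ` uniformly (essentially) with values in `S²`,
and `Wₙ ⇀ W` weakly in `L²(μ;ℝ³)`,
`liminf ∫ ψ(τₙ, Wₙ) dμ ≥ ∫ ψ(τ, W) dμ`. -/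
theorem stmt17 {X : Type*} [MeasurableSpace X] (μ : Measure X) [IsFiniteMeasure μ]
    (ψ : EuclideanSpace ℝ (Fin 3) → EuclideanSpace ℝ (Fin 3) → ℝ≥0∞)
    (hlsc : LowerSemicontinuousOn
      (fun p : EuclideanSpace ℝ (Fin 3) × EuclideanSpace ℝ (Fin 3) => ψ p.1 p.2)
      ((Metric.sphere (0 : EuclideanSpace ℝ (Fin 3)) 1) ×ˢ Set.univ))
    (hconv : ∀ τ : EuclideanSpace ℝ (Fin 3), ‖τ‖ = 1 →
      ∀ v w : EuclideanSpace ℝ (Fin 3), ∀ a b : ℝ, 0 ≤ a → 0 ≤ b → a + b = 1 →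
        ψ τ (a • v + b • w) ≤ ENNReal.ofReal a * ψ τ v + ENNReal.ofReal b * ψ τ w)
    (τn : ℕ → X → EuclideanSpace ℝ (Fin 3)) (τ : X → EuclideanSpace ℝ (Fin 3))
    (hτnmeas : ∀ n, Measurable (τn n)) (hτmeas : Measurable τ)
    (hτnunit : ∀ n x, ‖τn n x‖ = 1) (hτunit : ∀ x, ‖τ x‖ = 1)
    (hτconv : ∀ δ : ℝ, 0 < δ → ∃ N : ℕ, ∀ n ≥ N, ∀ᵐ x ∂μ, ‖τn n x - τ x‖ ≤ δ)
    (W : ℕ → Lp (EuclideanSpace ℝ (Fin 3)) 2 μ) (W' : Lp (EuclideanSpace ℝ (Fin 3)) 2 μ)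
    (hweak : ∀ φ : Lp (EuclideanSpace ℝ (Fin 3)) 2 μ,
      Tendsto (fun n => (⟪φ, W n⟫ : ℝ)) atTop (nhds (⟪φ, W'⟫ : ℝ))) :
    (∫⁻ x, ψ (τ x) (W' x) ∂μ) ≤ atTop.liminf fun n => ∫⁻ x, ψ (τn n x) (W n x) ∂μ := by
  classical
  set S : Set (E3 × E3) := (Metric.sphere (0 : E3) 1) ×ˢ Set.univ with hSdef
  have hSclosed : IsClosed S := Metric.isClosed_sphere.prod isClosed_univ
  have hmemS : ∀ (σ w : E3), ‖σ‖ = 1 → (σ, w) ∈ S := fun σ w hσ =>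
    ⟨mem_sphere_zero_iff_norm.mpr hσ, Set.mem_univ _⟩
  set Ψ : E3 × E3 → ℝ≥0∞ := fun p => if p ∈ S then ψ p.1 p.2 else ⊤ with hΨdef
  have hΨlsc : LowerSemicontinuous Ψ := lsc_extension hSclosed hlsc
  have hΨeq : ∀ (σ w : E3), ‖σ‖ = 1 → Ψ (σ, w) = ψ σ w := fun σ w hσ => by
    rw [hΨdef]; simp only [if_pos (hmemS σ w hσ)]
  -- uniform bound on the norms
  obtain ⟨M, hM0, hM⟩ := weak_bounded W W' hweak
  set K : ℝ≥0∞ := (ENNReal.ofReal M) ^ 2 with hKdef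
  have hKne : K ≠ ⊤ := by
    rw [hKdef]
    exact (ENNReal.pow_ne_top ENNReal.ofReal_ne_top)
  set I0 : ℕ → ℝ≥0∞ := fun n => ∫⁻ x, ψ (τn n x) (W n x) ∂μ with hI0
  -- the coercive approximations
  have hmainr : ∀ r : ℕ,
      (∫⁻ x, ψ (τ x) (W' x) ∂μ) ≤ atTop.liminf I0 + ENNReal.ofReal (1/((r:ℝ)+1)) * K := by
    intro r
    set εr : ℝ := 1/((r:ℝ)+1) with hεrdef
    have hεr : 0 < εr := one_div_succ_pos r
    set F : E3 × E3 → ℝ≥0∞ := fun p => Ψ p + ENNReal.ofReal (εr * ‖p.2‖ ^ 2) with hFdef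
    have hFlsc : LowerSemicontinuous F := by
      refine hΨlsc.add (Continuous.lowerSemicontinuous ?_)
      exact ENNReal.continuous_ofReal.comp
        (continuous_const.mul ((continuous_snd.norm).pow 2))
    have hcoer : ∀ p : E3 × E3, ENNReal.ofReal (εr * ‖p.2‖ ^ 2) ≤ F p := fun p => le_add_self
    have hconvF : ∀ τ0 : E3, ‖τ0‖ = 1 → ∀ v w : E3, ∀ a b : ℝ, 0 ≤ a → 0 ≤ b → a + b = 1 →
        F (τ0, a • v + b • w) ≤ ENNReal.ofReal a * F (τ0, v) + ENNReal.ofReal b * F (τ0, w) := by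
      intro τ0 hτ0 v w a b ha hb hab
      have h1 : F (τ0, a • v + b • w) = ψ τ0 (a • v + b • w)
          + ENNReal.ofReal (εr * ‖a • v + b • w‖ ^ 2) := by
        rw [hFdef]; simp only; rw [hΨeq _ _ hτ0]
      have h2 : εr * ‖a • v + b • w‖ ^ 2 ≤ a * (εr * ‖v‖ ^ 2) + b * (εr * ‖w‖ ^ 2) := by
        have h3 : ‖a • v + b • w‖ ≤ a * ‖v‖ + b * ‖w‖ := by
          calc ‖a • v + b • w‖ ≤ ‖a • v‖ + ‖b • w‖ := norm_add_le _ _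
          _ = a * ‖v‖ + b * ‖w‖ := by
            rw [norm_smul, norm_smul, Real.norm_eq_abs, Real.norm_eq_abs,
              abs_of_nonneg ha, abs_of_nonneg hb]
        have h4 : ‖a • v + b • w‖ ^ 2 ≤ (a * ‖v‖ + b * ‖w‖) ^ 2 := by
          refine pow_le_pow_left₀ (norm_nonneg _) h3 2
        have h5 : (a * ‖v‖ + b * ‖w‖) ^ 2 ≤ a * ‖v‖ ^ 2 + b * ‖w‖ ^ 2 := sq_cvx ha hb hab
        nlinarith [hεr.le]
      calc F (τ0, a • v + b • w)
          ≤ (ENNReal.ofReal a * ψ τ0 v + ENNReal.ofReal b * ψ τ0 w)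
            + ENNReal.ofReal (a * (εr * ‖v‖ ^ 2) + b * (εr * ‖w‖ ^ 2)) := by
            rw [h1]
            exact add_le_add (hconv τ0 hτ0 v w a b ha hb hab) (ENNReal.ofReal_le_ofReal h2)
      _ = (ENNReal.ofReal a * ψ τ0 v + ENNReal.ofReal b * ψ τ0 w)
            + (ENNReal.ofReal a * ENNReal.ofReal (εr * ‖v‖ ^ 2)
              + ENNReal.ofReal b * ENNReal.ofReal (εr * ‖w‖ ^ 2)) := by
            rw [ENNReal.ofReal_add (mul_nonneg ha (by positivity)) (mul_nonneg hb (by positivity)),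
              ENNReal.ofReal_mul ha, ENNReal.ofReal_mul hb]
      _ = ENNReal.ofReal a * F (τ0, v) + ENNReal.ofReal b * F (τ0, w) := by
            rw [hFdef]; simp only; rw [hΨeq _ _ hτ0, hΨeq _ _ hτ0]
            ring
    have hmain := mainEstimate μ F hFlsc hεr hcoer hconvF τn τ hτnmeas hτnunit hτunit hτconv
      W W' hweak
    -- lower bound for the left-hand side
    have hlhs : (∫⁻ x, ψ (τ x) (W' x) ∂μ) ≤ ∫⁻ x, F (τ x, W' x) ∂μ := by
      refine lintegral_mono fun x => ?_
      rw [hFdef]; simp only; rw [hΨeq _ _ (hτunit x)]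
      exact le_self_add
    -- upper bound for the right-hand side
    have hrhs : ∀ n : ℕ, (∫⁻ x, F (τn n x, W n x) ∂μ) ≤ I0 n + ENNReal.ofReal εr * K := by
      intro n
      have hpart : AEMeasurable (fun x => ENNReal.ofReal (εr * ‖W n x‖ ^ 2)) μ := by
        refine ENNReal.measurable_ofReal.comp_aemeasurable ?_
        exact (((Lp.aestronglyMeasurable (W n)).aemeasurable.norm.pow_const 2).const_mul εr)
      have heq : (∫⁻ x, F (τn n x, W n x) ∂μ)
          = ∫⁻ x, (ψ (τn n x) (W n x) + ENNReal.ofReal (εr * ‖W n x‖ ^ 2)) ∂μ := by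
        refine lintegral_congr fun x => ?_
        rw [hFdef]; simp only; rw [hΨeq _ _ (hτnunit n x)]
      rw [heq, lintegral_add_right' _ hpart]
      refine add_le_add_right ?_ (I0 n)
      have heq2 : (∫⁻ x, ENNReal.ofReal (εr * ‖W n x‖ ^ 2) ∂μ)
          = ENNReal.ofReal εr * ∫⁻ x, ENNReal.ofReal (‖W n x‖ ^ 2) ∂μ := by
        rw [← lintegral_const_mul' _ _ ENNReal.ofReal_ne_top]
        refine lintegral_congr fun x => ?_
        rw [← ENNReal.ofReal_mul hεr.le]
      rw [heq2]
      exact mul_le_mul_right (lintegral_norm_sq_le (W n) (hM n)) _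
    calc (∫⁻ x, ψ (τ x) (W' x) ∂μ) ≤ ∫⁻ x, F (τ x, W' x) ∂μ := hlhs
    _ ≤ atTop.liminf fun n => ∫⁻ x, F (τn n x, W n x) ∂μ := hmain
    _ ≤ atTop.liminf fun n => I0 n + ENNReal.ofReal εr * K :=
        liminf_le_liminf (Filter.Eventually.of_forall hrhs)
    _ ≤ atTop.liminf I0 + ENNReal.ofReal εr * K := liminf_add_const_le
  -- let r → ∞
  have htend : Tendsto (fun r : ℕ => atTop.liminf I0 + ENNReal.ofReal (1/((r:ℝ)+1)) * K)
      atTop (nhds (atTop.liminf I0)) := by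
    have h1 : Tendsto (fun r : ℕ => ENNReal.ofReal (1/((r:ℝ)+1))) atTop (nhds 0) := by
      have := (ENNReal.continuous_ofReal.tendsto 0).comp tendsto_one_div_succ
      simpa [Function.comp_def] using this
    have h2 : Tendsto (fun r : ℕ => ENNReal.ofReal (1/((r:ℝ)+1)) * K) atTop (nhds 0) := by
      have := ENNReal.Tendsto.mul_const h1 (Or.inr hKne)
      simpa using this
    have h3 := h2.const_add (atTop.liminf I0)
    simpa using h3
  exact ge_of_tendsto' htend hmainr

end
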